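/- There exists a function ρ from instruction sequences to closed terms of BTA with explicit substitution such that for every instruction sequence P, the term ρ(P) evaluates to the finite thread |P| (the thread extraction of P) and tsize(ρ(P)) ≤ 4·psize(P) + 1. -/

import Mathlib

/-- Boolean register names: `inp i` is input register `in:(i+1)`,
`aux i` is auxiliary register `aux:(i+1)`, `out` is the output register. -/
inductive Reg where
  | inp : ℕ → Reg
  | aux : ℕ → Reg
  | out : Reg
deriving DecidableEq

/-- Basic instructions: register reads/writes, and (for splitting instruction
sequences) `split p` and `reply p` for Boolean parameters `p`. -/
inductive BInstr where
  | get : Reg → BInstr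
  | set : Reg → Bool → BInstr
  | split : ℕ → BInstr
  | reply : ℕ → BInstr
deriving DecidableEq

/-- Primitive instructions. -/
inductive PInstr where
  | plain : BInstr → PInstr
  | pos : BInstr → PInstr
  | neg : BInstr → PInstr
  | jump : ℕ → PInstr
  | halt : PInstr
deriving DecidableEq

abbrev RegState := Reg → Bool

/-- State change caused by processing a basic instruction. -/
def BInstr.effect : BInstr → RegState → RegState
  | .set r b, s => Function.update s r b
  | _, s => s

/-- Reply produced by processing a basic instruction. -/
def BInstr.rpl : BInstr → RegState → Bool
  | .get r, s => s r
  | .set _ b, _ => b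
  | _, _ => false

def BInstr.isSplitReply : BInstr → Bool
  | .split _ => true
  | .reply _ => true
  | _ => false

/-- Single-thread execution of an instruction sequence on Boolean registers;
`none` means deadlock, `some s` means termination in register state `s`.
(`split`/`reply` instructions make no sense here and deadlock.) -/
def exec : List PInstr → RegState → Option RegState
  | [], _ => none
  | .plain a :: X, s =>
      if a.isSplitReply then none else exec X (a.effect s)
  | .pos a :: X, s =>
      if a.isSplitReply then none
      else if a.rpl s then exec X (a.effect s) else exec (X.drop 1) (a.effect s)
  | .neg a :: X, s =>
      if a.isSplitReply then none
      else if a.rpl s then exec (X.drop 1) (a.effect s) else exec X (a.effect s)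
  | .jump 0 :: _, _ => none
  | .jump (l+1) :: X, s => exec (X.drop l) s
  | .halt :: _, s => some s
termination_by X _ => X.length
decreasing_by all_goals (simp only [List.length_drop, List.length_cons]; omega)

/-- Initial register state: input registers `in:1 .. in:n` contain
`b 0, ..., b (n-1)`; all other registers contain `false`. -/
def initState (n : ℕ) (b : Fin n → Bool) : RegState := fun r =>
  match r with
  | .inp i => if h : i < n then b ⟨i, h⟩ else false
  | _ => false

/-- `X` computes the `n`-ary Boolean function `f`: for every input, execution
terminates (does not deadlock) with the output register containing `f b`. -/
def Computes {n : ℕ} (f : (Fin n → Bool) → Bool) (X : List PInstr) : Prop :=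
  ∀ b : Fin n → Bool, ∃ s : RegState,
    exec X (initState n b) = some s ∧ s Reg.out = f b

/-- Basic instructions allowed in `IS_br`. -/
def BrBasic : BInstr → Prop
  | .get (.inp _) => True
  | .get (.aux _) => True
  | .set (.aux _) _ => True
  | .set .out _ => True
  | _ => False

/-- Basic instructions allowed in `IS_br^na`. -/
def NaBasic : BInstr → Prop
  | .get (.inp _) => True
  | .set .out _ => True
  | _ => False

def InstrBasicOK (P : BInstr → Prop) : PInstr → Prop
  | .plain a => P a
  | .pos a => P a
  | .neg a => P a
  | _ => True

/-- Membership of `IS_br` (non-empty, only allowed basic instructions). -/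
def ISbr (X : List PInstr) : Prop :=
  X ≠ [] ∧ ∀ u ∈ X, InstrBasicOK BrBasic u

/-- Membership of `IS_br^na`. -/
def ISbrna (X : List PInstr) : Prop :=
  X ≠ [] ∧ ∀ u ∈ X, InstrBasicOK NaBasic u

/-- The primitive instruction contains the basic instruction `out.set:false`. -/
def UsesOutSetFalse : PInstr → Prop
  | .plain (.set .out false) => True
  | .pos (.set .out false) => True
  | .neg (.set .out false) => True
  | _ => False

/-- The class PLIS of Boolean function families computable by
polynomial-length instruction sequences from `IS_br`. -/
def PLIS (F : (n : ℕ) → (Fin n → Bool) → Bool) : Prop :=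
  ∃ h : Polynomial ℕ, ∀ n : ℕ, ∃ X : List PInstr,
    ISbr X ∧ Computes (F n) X ∧ X.length ≤ h.eval n

/-- Finite threads of basic thread algebra: `S` (termination), `D` (deadlock)
and postconditional composition `pcc p a q` (i.e. `p ⊴ a ⊵ q`). -/
inductive Thread where
  | S : Thread
  | D : Thread
  | pcc : Thread → BInstr → Thread → Thread

/-- Thread extraction `|X|` of an instruction sequence. -/
def textract : List PInstr → Thread
  | [] => .D
  | .plain a :: X => .pcc (textract X) a (textract X)
  | .pos a :: X => .pcc (textract X) a (textract (X.drop 1))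
  | .neg a :: X => .pcc (textract (X.drop 1)) a (textract X)
  | .jump 0 :: _ => .D
  | .jump (l+1) :: X => textract (X.drop l)
  | .halt :: _ => .S
termination_by X => X.length
decreasing_by all_goals (simp only [List.length_drop, List.length_cons]; omega)

/-- Terms of BTA with explicit substitution: `subst p x q` is `⟨p/x⟩q`. -/
inductive ESTerm where
  | S : ESTerm
  | D : ESTerm
  | var : ℕ → ESTerm
  | pcc : ESTerm → BInstr → ESTerm → ESTerm
  | subst : ESTerm → ℕ → ESTerm → ESTerm

/-- Evaluation of a term to a finite thread (an environment interprets the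
variables; for closed terms the result is independent of it). -/
def ESTerm.eval (env : ℕ → Thread) : ESTerm → Thread
  | .S => .S
  | .D => .D
  | .var x => env x
  | .pcc p a q => .pcc (p.eval env) a (q.eval env)
  | .subst p x q => q.eval (Function.update env x (p.eval env))

/-- Free variables; a term is closed iff it has none. -/
def ESTerm.fv : ESTerm → Finset ℕ
  | .S => ∅
  | .D => ∅
  | .var x => {x}
  | .pcc p _ q => p.fv ∪ q.fv
  | .subst p x q => p.fv ∪ (q.fv \ {x})

/-- Size of a term. -/
def ESTerm.tsize : ESTerm → ℕ
  | .S => 1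
  | .D => 1
  | .var _ => 1
  | .pcc p _ q => p.tsize + q.tsize + 1
  | .subst p _ q => p.tsize + q.tsize + 1

/-- Small term for the thread extraction at position `k`, referring to
later positions through variables (capped at `n`). -/
def eTerm (n k : ℕ) : PInstr → ESTerm
  | .plain a => .pcc (.var (min (k+1) n)) a (.var (min (k+1) n))
  | .pos a => .pcc (.var (min (k+1) n)) a (.var (min (k+2) n))
  | .neg a => .pcc (.var (min (k+2) n)) a (.var (min (k+1) n))
  | .jump 0 => .D
  | .jump (l+1) => .var (min (k+1+l) n)
  | .halt => .S

def eAt (P : List PInstr) (k : ℕ) : ESTerm :=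
  match P[k]? with
  | some i => eTerm P.length k i
  | none => .D

/-- Nested explicit substitutions closing variables `k, k-1, ..., 1`. -/
def chainC (P : List PInstr) : ℕ → ESTerm
  | 0 => eAt P 0
  | k+1 => .subst (eAt P (k+1)) (k+1) (chainC P k)

lemma drop_textract_min (P : List PInstr) (m : ℕ) :
    textract (P.drop (min m P.length)) = textract (P.drop m) := by
  rcases le_or_gt m P.length with h | h
  · rw [min_eq_left h]
  · rw [min_eq_right h.le, List.drop_eq_nil_of_le (le_refl _),
      List.drop_eq_nil_of_le h.le]

lemma eAt_fv (P : List PInstr) (k : ℕ) :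
    ∀ m ∈ (eAt P k).fv, k < m ∧ m ≤ P.length := by
  intro m hm
  unfold eAt at hm
  rcases h : P[k]? with _ | i
  · rw [h] at hm; simp [ESTerm.fv] at hm
  · rw [h] at hm
    have hk : k < P.length := by
      by_contra hk
      rw [List.getElem?_eq_none (by omega)] at h; cases h
    cases i with
    | plain a => simp [eTerm, ESTerm.fv] at hm; omega
    | pos a => simp [eTerm, ESTerm.fv] at hm; rcases hm with h' | h' <;> omega
    | neg a => simp [eTerm, ESTerm.fv] at hm; rcases hm with h' | h' <;> omega
    | jump l =>
      cases l with
      | zero => simp [eTerm, ESTerm.fv] at hm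
      | succ l => simp [eTerm, ESTerm.fv] at hm; omega
    | halt => simp [eTerm, ESTerm.fv] at hm

lemma chainC_fv (P : List PInstr) (k : ℕ) :
    ∀ m ∈ (chainC P k).fv, k < m ∧ m ≤ P.length := by
  induction k with
  | zero => exact eAt_fv P 0
  | succ k ih =>
    intro m hm
    simp only [chainC, ESTerm.fv, Finset.mem_union, Finset.mem_sdiff,
      Finset.mem_singleton] at hm
    rcases hm with h | ⟨h1, h2⟩
    · exact eAt_fv P (k+1) m h
    · have := ih m h1; omega

lemma eAt_eval (P : List PInstr) (k : ℕ) (env : ℕ → Thread)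
    (henv : ∀ m, k < m → m ≤ P.length → env m = textract (P.drop m)) :
    (eAt P k).eval env = textract (P.drop k) := by
  unfold eAt
  rcases h : P[k]? with _ | i
  · have hk : P.length ≤ k := by
      by_contra hk
      rw [List.getElem?_eq_getElem (by omega)] at h; cases h
    rw [List.drop_eq_nil_of_le hk]
    simp [ESTerm.eval, textract]
  · have hk : k < P.length := by
      by_contra hk
      rw [List.getElem?_eq_none (by omega)] at h; cases h
    have hd : P.drop k = P[k] :: P.drop (k+1) := List.drop_eq_getElem_cons hk
    have hvar : ∀ j, k < j → env (min j P.length) = textract (P.drop j) := by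
      intro j hj
      rw [henv (min j P.length) (by omega) (by omega)]
      exact drop_textract_min P j
    have hget : i = P[k] := by
      have h2 := List.getElem?_eq_getElem hk
      rw [h] at h2; exact Option.some.inj h2
    show (eTerm P.length k i).eval env = textract (P.drop k)
    rw [hd, ← hget]
    cases i with
    | plain a =>
      simp only [eTerm, ESTerm.eval, textract]
      rw [hvar (k+1) (by omega)]
    | pos a =>
      simp only [eTerm, ESTerm.eval, textract]
      rw [hvar (k+1) (by omega), hvar (k+2) (by omega), List.drop_drop]
    | neg a =>
      simp only [eTerm, ESTerm.eval, textract]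
      rw [hvar (k+1) (by omega), hvar (k+2) (by omega), List.drop_drop]
    | jump l =>
      cases l with
      | zero => simp [eTerm, ESTerm.eval, textract]
      | succ l =>
        simp only [eTerm, ESTerm.eval, textract]
        rw [hvar (k+1+l) (by omega), List.drop_drop]
    | halt => simp [eTerm, ESTerm.eval, textract]

lemma chainC_eval (P : List PInstr) (k : ℕ) (env : ℕ → Thread)
    (henv : ∀ m, k < m → m ≤ P.length → env m = textract (P.drop m)) :
    (chainC P k).eval env = textract P := by
  induction k generalizing env with
  | zero =>
    have := eAt_eval P 0 env henv
    simpa [chainC] using this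
  | succ k ih =>
    simp only [chainC, ESTerm.eval]
    rw [eAt_eval P (k+1) env (fun m h1 h2 => henv m (by omega) h2)]
    apply ih
    intro m h1 h2
    rcases eq_or_ne m (k+1) with rfl | hne
    · simp [Function.update]
    · rw [Function.update_of_ne hne]
      exact henv m (by omega) h2

lemma eTerm_tsize (n k : ℕ) (i : PInstr) : (eTerm n k i).tsize ≤ 3 := by
  cases i with
  | plain a => simp [eTerm, ESTerm.tsize]
  | pos a => simp [eTerm, ESTerm.tsize]
  | neg a => simp [eTerm, ESTerm.tsize]
  | jump l => cases l <;> simp [eTerm, ESTerm.tsize]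
  | halt => simp [eTerm, ESTerm.tsize]

lemma eAt_tsize (P : List PInstr) (k : ℕ) : (eAt P k).tsize ≤ 3 := by
  unfold eAt
  rcases h : P[k]? with _ | i
  · simp [ESTerm.tsize]
  · exact eTerm_tsize _ _ _

lemma chainC_tsize (P : List PInstr) (k : ℕ) :
    (chainC P k).tsize ≤ 4 * k + 3 := by
  induction k with
  | zero => simpa [chainC] using eAt_tsize P 0
  | succ k ih =>
    have := eAt_tsize P (k+1)
    simp only [chainC, ESTerm.tsize]
    omega

/-- Theorem 7 of the paper: linear-size thread extraction is possible with
explicit substitution: there is a translation `ρ` to closed terms of BTA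
with explicit substitution that evaluates to the thread extraction and has
size at most `4 · psize(P) + 1`. -/
theorem statement15 :
    ∃ ρ : List PInstr → ESTerm, ∀ P : List PInstr, P ≠ [] →
      (ρ P).fv = ∅ ∧
      (∀ env : ℕ → Thread, (ρ P).eval env = textract P) ∧
      (ρ P).tsize ≤ 4 * P.length + 1 := by
  refine ⟨fun P => chainC P P.length, fun P hP => ⟨?_, ?_, ?_⟩⟩
  · ext m
    simp only [Finset.notMem_empty, iff_false]
    intro hm
    have := chainC_fv P P.length m hm
    omega
  · intro env
    have := chainC_eval P P.length env (fun m h1 h2 => absurd h2 (by omega))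
    simpa using this
  · obtain ⟨i, Q, rfl⟩ := List.exists_cons_of_ne_nil hP
    simp only [List.length_cons]
    have h1 : (eAt (i :: Q) (Q.length + 1)).tsize = 1 := by
      unfold eAt
      rw [List.getElem?_eq_none (by simp)]
      simp [ESTerm.tsize]
    have h2 := chainC_tsize (i :: Q) Q.length
    simp only [chainC, ESTerm.tsize, h1]
    omega
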